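/- Single linkage hierarchical clustering is semi-stable in the Gromov–Hausdorff sense: if (X_k,d_k) is a sequence of finite metric spaces and (U,u) is a finite ultrametric space such that d_GH((X_k,d_k),(U,u)) → 0 as k → ∞, then d_GH((X_k,u_SL^{X_k}),(U,u)) → 0, where u_SL^{X_k} is the single-linkage ultrametric of (X_k,d_k). -/
import Mathlib


/-- A distance function `d` is a metric. -/
def IsMetric {X : Type*} (d : X → X → ℝ) : Prop :=
  (∀ x y, d x y = d y x) ∧ (∀ x y, d x y = 0 ↔ x = y) ∧ (∀ x y z, d x z ≤ d x y + d y z)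

/-- A distance function is an ultrametric: a metric satisfying the strong triangle
inequality. -/
def IsUltrametricD {X : Type*} (d : X → X → ℝ) : Prop :=
  IsMetric d ∧ ∀ x y z, d x z ≤ max (d x y) (d y z)

/-- The maximum of the consecutive distances along the chain `x :: l ++ [y]`. -/
def chainMax {X : Type*} (d : X → X → ℝ) : X → List X → X → ℝ
  | x, [], y => d x y
  | x, z :: l, y => max (d x z) (chainMax d z l y)

/-- The single-linkage ultrametric: the minimum over all chains from `x` to `y`
of the maximum of the consecutive distances along the chain. -/
noncomputable def uSL {X : Type*} (d : X → X → ℝ) (x y : X) : ℝ :=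
  sInf { r | ∃ l : List X, chainMax d x l y = r }

/-- A correspondence between `X` and `Y`: every point of `X` and every point of `Y`
occurs in some pair. -/
def IsCorr {X Y : Type*} (τ : Set (X × Y)) : Prop :=
  (∀ x, ∃ y, (x, y) ∈ τ) ∧ (∀ y, ∃ x, (x, y) ∈ τ)

/-- The distortion of a correspondence: the supremum of `|d_X(x,x') − d_Y(y,y')|`
over pairs `(x,y), (x',y')` in the correspondence. -/
noncomputable def corrDist {X Y : Type*} (dX : X → X → ℝ) (dY : Y → Y → ℝ)
    (τ : Set (X × Y)) : ℝ :=
  sSup { v | ∃ p ∈ τ, ∃ q ∈ τ, v = |dX p.1 q.1 - dY p.2 q.2| }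

/-- The Gromov–Hausdorff distance: half the infimum over correspondences of their
distortion. -/
noncomputable def ghDist {X Y : Type*} (dX : X → X → ℝ) (dY : Y → Y → ℝ) : ℝ :=
  (1 / 2) * sInf { r | ∃ τ : Set (X × Y), IsCorr τ ∧ corrDist dX dY τ = r }

/-- Single linkage value between two blocks: minimal cross distance. -/
noncomputable def ellSL {X : Type*} (d : X → X → ℝ) (A B : Finset X) : ℝ :=
  sInf { r | ∃ a ∈ A, ∃ b ∈ B, d a b = r }

/-- Complete linkage value between two blocks: maximal cross distance. -/
noncomputable def ellCL {X : Type*} (d : X → X → ℝ) (A B : Finset X) : ℝ :=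
  sSup { r | ∃ a ∈ A, ∃ b ∈ B, d a b = r }

/-- Average linkage value between two blocks: average cross distance. -/
noncomputable def ellAL {X : Type*} (d : X → X → ℝ) (A B : Finset X) : ℝ :=
  (∑ a ∈ A, ∑ b ∈ B, d a b) / (A.card * B.card)

/-- A finite (nonempty) metric space, packaged with carrier `Fin n`. -/
structure FinMetricSpace where
  n : ℕ
  pos : 0 < n
  d : Fin n → Fin n → ℝ
  metric : IsMetric d

lemma metric_nonneg {X : Type*} {d : X → X → ℝ} (hd : IsMetric d) (x y : X) : 0 ≤ d x y := by
  have h1 := hd.2.2 x y x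
  have h2 := hd.1 y x
  have h3 := (hd.2.1 x x).2 rfl
  nlinarith

lemma chainMax_nonneg {X : Type*} {d : X → X → ℝ} (hd : IsMetric d) :
    ∀ (x : X) (l : List X) (y : X), 0 ≤ chainMax d x l y
  | x, [], y => metric_nonneg hd x y
  | x, z :: l, y => le_trans (metric_nonneg hd x z) (le_max_left _ _)

lemma uSL_le_d {X : Type*} {d : X → X → ℝ} (hd : IsMetric d) (x y : X) :
    uSL d x y ≤ d x y :=
  csInf_le ⟨0, fun r ⟨l, hl⟩ => hl ▸ chainMax_nonneg hd x l y⟩ ⟨[], rfl⟩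

/-- Key chain lemma: along any chain in `X`, the ultrametric distance between
corresponding endpoints in `U` is bounded by the chain max plus the distortion. -/
lemma chain_key {X Y : Type*} {d : X → X → ℝ} {u : Y → Y → ℝ} (hu : IsUltrametricD u)
    {τ : Set (X × Y)} (hcov : ∀ z : X, ∃ w, (z, w) ∈ τ) {ε : ℝ}
    (hdis : ∀ p ∈ τ, ∀ q ∈ τ, |d p.1 q.1 - u p.2 q.2| ≤ ε) :
    ∀ (l : List X) (x x' : X) (y y' : Y), (x, y) ∈ τ → (x', y') ∈ τ →
      u y y' ≤ chainMax d x l x' + ε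
  | [], x, x', y, y', hxy, hxy' => by
      have := hdis _ hxy _ hxy'
      have := abs_le.1 this
      simp only [chainMax]
      linarith [this.1]
  | z :: l, x, x', y, y', hxy, hxy' => by
      obtain ⟨w, hw⟩ := hcov z
      have h1 : u y w ≤ d x z + ε := by
        have := abs_le.1 (hdis _ hxy _ hw)
        linarith [this.1]
      have h2 : u w y' ≤ chainMax d z l x' + ε := chain_key hu hcov hdis l z x' w y' hw hxy'
      have h3 := hu.2 y w y'
      simp only [chainMax]
      rcases le_total (u y w) (u w y') with hc | hc
      · calc u y y' ≤ max (u y w) (u w y') := h3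
          _ = u w y' := max_eq_right hc
          _ ≤ chainMax d z l x' + ε := h2
          _ ≤ max (d x z) (chainMax d z l x') + ε := by
              have := le_max_right (d x z) (chainMax d z l x'); linarith
      · calc u y y' ≤ max (u y w) (u w y') := h3
          _ = u y w := max_eq_left hc
          _ ≤ d x z + ε := h1
          _ ≤ max (d x z) (chainMax d z l x') + ε := by
              have := le_max_left (d x z) (chainMax d z l x'); linarith

lemma corrDist_nonneg {X Y : Type*} (dX : X → X → ℝ) (dY : Y → Y → ℝ) (τ : Set (X × Y)) :
    0 ≤ corrDist dX dY τ :=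
  Real.sSup_nonneg (fun v ⟨p, _, q, _, hv⟩ => hv ▸ abs_nonneg _)

lemma ghDist_nonneg {X Y : Type*} (dX : X → X → ℝ) (dY : Y → Y → ℝ) :
    0 ≤ ghDist dX dY := by
  apply mul_nonneg (by norm_num)
  exact Real.sInf_nonneg (fun r ⟨τ, _, hr⟩ => hr ▸ corrDist_nonneg dX dY τ)

lemma corrDist_uSL_le {X Y : Type*} [Finite X] [Finite Y] {d : X → X → ℝ} {u : Y → Y → ℝ}
    (hd : IsMetric d) (hu : IsUltrametricD u) {τ : Set (X × Y)} (hτ : IsCorr τ) :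
    corrDist (uSL d) u τ ≤ corrDist d u τ := by
  set ε := corrDist d u τ with hε
  have hbdd : BddAbove { v | ∃ p ∈ τ, ∃ q ∈ τ, v = |d p.1 q.1 - u p.2 q.2| } := by
    apply Set.Finite.bddAbove
    apply Set.Finite.subset
      (Set.finite_range (fun pq : (X × Y) × (X × Y) => |d pq.1.1 pq.2.1 - u pq.1.2 pq.2.2|))
    rintro v ⟨p, _, q, _, hv⟩
    exact ⟨(p, q), hv.symm⟩
  have hdis : ∀ p ∈ τ, ∀ q ∈ τ, |d p.1 q.1 - u p.2 q.2| ≤ ε := by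
    intro p hp q hq
    exact le_csSup hbdd ⟨p, hp, q, hq, rfl⟩
  apply Real.sSup_le _ (corrDist_nonneg d u τ)
  rintro v ⟨p, hp, q, hq, hv⟩
  subst hv
  rw [abs_le]
  constructor
  · -- u - ε ≤ uSL : every chain max is ≥ u - ε
    have : u p.2 q.2 - ε ≤ uSL d p.1 q.1 := by
      have hne : { r | ∃ l : List X, chainMax d p.1 l q.1 = r }.Nonempty :=
        ⟨d p.1 q.1, [], rfl⟩
      apply le_csInf hne
      rintro r ⟨l, hl⟩
      have := chain_key hu hτ.1 hdis l p.1 q.1 p.2 q.2 (by simpa using hp) (by simpa using hq)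
      rw [hl] at this
      linarith
    linarith
  · -- uSL ≤ d ≤ u + ε
    have h1 : uSL d p.1 q.1 ≤ d p.1 q.1 := uSL_le_d hd p.1 q.1
    have h2 := (abs_le.1 (hdis p hp q hq)).2
    linarith

/-- single linkage is semi-stable in the Gromov–Hausdorff sense: if a
sequence of finite metric spaces converges (in `d_GH`) to a finite ultrametric space
`(U,u)`, then the sequence of their single-linkage ultrametric spaces converges to
`(U,u)` as well. -/
theorem stmt5 (Xk : ℕ → FinMetricSpace) (U : FinMetricSpace) (hU : IsUltrametricD U.d)
    (h : Filter.Tendsto (fun k => ghDist (Xk k).d U.d) Filter.atTop (nhds 0)) :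
    Filter.Tendsto (fun k => ghDist (uSL (Xk k).d) U.d) Filter.atTop (nhds 0) := by
  have hle : ∀ k, ghDist (uSL (Xk k).d) U.d ≤ ghDist (Xk k).d U.d := by
    intro k
    unfold ghDist
    apply mul_le_mul_of_nonneg_left _ (by norm_num : (0:ℝ) ≤ 1/2)
    have hAbdd : BddBelow { r | ∃ τ : Set (Fin (Xk k).n × Fin U.n),
        IsCorr τ ∧ corrDist (uSL (Xk k).d) U.d τ = r } :=
      ⟨0, fun r ⟨τ, _, hr⟩ => hr ▸ corrDist_nonneg _ _ τ⟩
    have hBne : { r | ∃ τ : Set (Fin (Xk k).n × Fin U.n),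
        IsCorr τ ∧ corrDist (Xk k).d U.d τ = r }.Nonempty := by
      refine ⟨_, Set.univ, ⟨?_, ?_⟩, rfl⟩
      · intro x; exact ⟨⟨0, U.pos⟩, trivial⟩
      · intro y; exact ⟨⟨0, (Xk k).pos⟩, trivial⟩
    apply le_csInf hBne
    rintro r ⟨τ, hτcorr, hr⟩
    calc sInf _ ≤ corrDist (uSL (Xk k).d) U.d τ := csInf_le hAbdd ⟨τ, hτcorr, rfl⟩
      _ ≤ corrDist (Xk k).d U.d τ := corrDist_uSL_le (Xk k).metric hU hτcorr
      _ = r := hr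
  exact tendsto_of_tendsto_of_tendsto_of_le_of_le tendsto_const_nhds h
    (fun k => ghDist_nonneg _ _) hle
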